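/- Let m and n be positive coprime integers. For every word w of length m+n in the alphabet {U,R} containing exactly m letters U and n letters R, exactly one of the m+n cyclic rotations of w is a rational Dyck word. -/

import Mathlib

/-- A word in the alphabet `{U, R}` (encoded as `Bool`, with `true` = `U` and
`false` = `R`) is a *rational Dyck word* for slope `m/n` if every prefix with
`b` letters `U` and `a` letters `R` satisfies `b * n ≥ a * m`. -/
def IsRationalDyckWord (m n : ℕ) (w : List Bool) : Prop :=
  ∀ k : ℕ, ((w.take k).count true) * n ≥ ((w.take k).count false) * m

namespace CycleAux

/-- Height function: value of the prefix of length `j` of `w ++ w`. -/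
def F (m n : ℕ) (w : List Bool) (j : ℕ) : ℤ :=
  (((w ++ w).take j).count true : ℤ) * n - (((w ++ w).take j).count false : ℤ) * m

lemma count_tf (l : List Bool) : l.count true + l.count false = l.length := by
  induction l with
  | nil => simp
  | cons a l ih => cases a <;> simp [List.count_cons] <;> omega

lemma F_periodic (m n : ℕ) (w : List Bool)
    (hU : w.count true = m) (hR : w.count false = n) (j : ℕ) (hj : j ≤ w.length) :
    F m n w (w.length + j) = F m n w j := by
  have h1 : (w ++ w).take (w.length + j) = w ++ w.take j := List.take_length_add_append j
  have h2 : (w ++ w).take j = w.take j := List.take_append_of_le_length hj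
  simp [F, h1, h2, List.count_append, hU, hR]
  ring

/-- prefix of rotation as segment of `w ++ w`. -/
lemma rotate_take (w : List Bool) (r k : ℕ) (hr : r ≤ w.length) (hk : k ≤ w.length) :
    (w.rotate r).take k = ((w ++ w).drop r).take k := by
  have hd : (w ++ w).drop r = w.drop r ++ w := List.drop_append_of_le_length hr
  rw [List.rotate_eq_drop_append_take hr, hd,
    List.take_append, List.take_append]
  congr 1
  rw [List.take_take]
  congr 1
  have : (w.drop r).length = w.length - r := List.length_drop ..
  omega

end CycleAux

namespace CycleAux

lemma F_add (m n : ℕ) (w : List Bool) (r k : ℕ) (hr : r ≤ w.length) (hk : k ≤ w.length) :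
    F m n w (r + k) = F m n w r
      + ((((w.rotate r).take k).count true : ℤ) * n - (((w.rotate r).take k).count false : ℤ) * m) := by
  have h1 : (w ++ w).take (r + k) = (w ++ w).take r ++ ((w ++ w).drop r).take k :=
    List.take_add ..
  rw [rotate_take w r k hr hk]
  simp [F, h1, List.count_append]
  ring

lemma dyck_iff (m n : ℕ) (w : List Bool) (r : ℕ) (hr : r ≤ w.length) :
    IsRationalDyckWord m n (w.rotate r) ↔
      ∀ k ≤ w.length, F m n w r ≤ F m n w (r + k) := by
  constructor
  · intro hd k hk
    have h := hd k
    rw [F_add m n w r k hr hk]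
    have : (((w.rotate r).take k).count false : ℤ) * m ≤ (((w.rotate r).take k).count true : ℤ) * n := by
      exact_mod_cast h
    linarith
  · intro h k
    rcases le_or_gt k w.length with hk | hk
    · have := h k hk
      rw [F_add m n w r k hr hk] at this
      have : (((w.rotate r).take k).count false : ℤ) * m ≤ (((w.rotate r).take k).count true : ℤ) * n := by
        linarith
      exact_mod_cast this
    · have hrot : (w.rotate r).take k = (w.rotate r).take w.length := by
        rw [List.take_of_length_le (by simp; omega), List.take_of_length_le (by simp)]
      have := h w.length le_rfl
      rw [F_add m n w r w.length hr le_rfl] at this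
      rw [hrot]
      have : (((w.rotate r).take w.length).count false : ℤ) * m ≤ (((w.rotate r).take w.length).count true : ℤ) * n := by
        linarith
      exact_mod_cast this

end CycleAux

namespace CycleAux

lemma F_inj (m n : ℕ) (hm : 0 < m) (hn : 0 < n) (hmn : Nat.Coprime m n)
    (w : List Bool) (hlen : w.length = m + n) (r s : ℕ) (hrs : r < s) (hs : s < w.length) :
    F m n w r ≠ F m n w s := by
  intro hF
  set ww := w ++ w with hww
  have hlen2 : ww.length = 2 * w.length := by simp [hww]; omega
  -- monotonicity of prefix counts
  have hmono : ∀ t : Bool, (ww.take r).count t ≤ (ww.take s).count t := by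
    intro t
    have : (ww.take s).take r = ww.take r := by
      rw [List.take_take]; congr 1; omega
    rw [← this]
    exact ((ww.take s).take_sublist r).count_le t
  -- prefix length identities
  have hsum : ∀ j : ℕ, j ≤ w.length → (ww.take j).count true + (ww.take j).count false = j := by
    intro j hj
    rw [count_tf, List.length_take]
    omega
  set bt := (ww.take s).count true - (ww.take r).count true with hbt
  set af := (ww.take s).count false - (ww.take r).count false with haf
  have hab : af + bt = s - r := by
    have h1 := hsum r (by omega)
    have h2 := hsum s (le_of_lt hs)
    have m1 := hmono true
    have m2 := hmono false
    omega
  have hkey : bt * n = af * m := by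
    have m1 := hmono true
    have m2 := hmono false
    have : (bt : ℤ) * n = (af : ℤ) * m := by
      simp only [hbt, haf]
      push_cast [m1, m2]
      simp only [F, ← hww] at hF
      linarith
    exact_mod_cast this
  have hmdvd : m ∣ bt := hmn.dvd_of_dvd_mul_right ⟨af, by linarith [hkey]⟩
  rcases Nat.eq_zero_or_pos bt with hb0 | hbpos
  · have : af = 0 := by
      have := hkey
      rw [hb0] at this
      simpa [Nat.mul_eq_zero, hm.ne'] using this.symm
    omega
  · have hbm : m ≤ bt := Nat.le_of_dvd hbpos hmdvd
    have han : n ≤ af := by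
      have h1 : m * n ≤ bt * n := Nat.mul_le_mul_right n hbm
      rw [hkey] at h1
      have h2 : n * m ≤ af * m := by linarith [h1]
      exact Nat.le_of_mul_le_mul_right h2 hm
    have hs1 := hsum r (by omega)
    have hs2 := hsum s (le_of_lt hs)
    omega

end CycleAux

open CycleAux in
/-- **Cycle lemma (Grossman).**  For positive coprime `m`, `n` and any word `w`
with exactly `m` letters `U` and `n` letters `R`, exactly one of the `m + n`
cyclic rotations of `w` is a rational Dyck word. -/
theorem exists_unique_rotation_isRationalDyckWord
    (m n : ℕ) (hm : 0 < m) (hn : 0 < n) (hmn : Nat.Coprime m n)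
    (w : List Bool) (hlen : w.length = m + n)
    (hU : w.count true = m) (hR : w.count false = n) :
    ∃! r : Fin (m + n), IsRationalDyckWord m n (w.rotate (r : ℕ)) := by
  have hL : 0 < w.length := by omega
  obtain ⟨r₀, hr₀mem, hr₀min⟩ := (Finset.range w.length).exists_min_image (F m n w)
    ⟨0, Finset.mem_range.mpr hL⟩
  have hr₀lt : r₀ < w.length := Finset.mem_range.mp hr₀mem
  have hmin : ∀ j < w.length, F m n w r₀ ≤ F m n w j := fun j hj =>
    hr₀min j (Finset.mem_range.mpr hj)
  -- key: any position s < L whose rotation is Dyck is a global minimum of F on [0, L)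
  have hdyck_min : ∀ s < w.length, IsRationalDyckWord m n (w.rotate s) →
      ∀ j < w.length, F m n w s ≤ F m n w j := by
    intro s hs hd j hj
    rw [dyck_iff m n w s (le_of_lt hs)] at hd
    rcases le_or_gt s j with hsj | hsj
    · have := hd (j - s) (by omega)
      rwa [Nat.add_sub_cancel' hsj] at this
    · have hk : j + w.length - s ≤ w.length := by omega
      have := hd (j + w.length - s) hk
      have heq : s + (j + w.length - s) = w.length + j := by omega
      rw [heq, F_periodic m n w hU hR j (le_of_lt hj)] at this
      exact this
  refine ⟨⟨r₀, by omega⟩, ?_, ?_⟩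
  · show IsRationalDyckWord m n (w.rotate r₀)
    rw [dyck_iff m n w r₀ (le_of_lt hr₀lt)]
    intro k hk
    rcases lt_or_ge (r₀ + k) w.length with h | h
    · exact hmin _ h
    · have h1 : w.length + (r₀ + k - w.length) = r₀ + k := by omega
      rw [← h1, F_periodic m n w hU hR _ (by omega)]
      exact hmin _ (by omega)
  · intro s hd
    have hslt : (s : ℕ) < w.length := by
      have := s.isLt; omega
    have h1 : F m n w (s : ℕ) ≤ F m n w r₀ := hdyck_min _ hslt hd r₀ hr₀lt
    have h2 : F m n w r₀ ≤ F m n w (s : ℕ) := hmin _ hslt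
    have heq : F m n w (s : ℕ) = F m n w r₀ := le_antisymm h1 h2
    have : (s : ℕ) = r₀ := by
      rcases lt_trichotomy (s : ℕ) r₀ with h | h | h
      · exact absurd heq (F_inj m n hm hn hmn w hlen _ _ h hr₀lt)
      · exact h
      · exact absurd heq.symm (F_inj m n hm hn hmn w hlen _ _ h hslt)
    exact Fin.ext this
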